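/- If x, y are p-adic integers with φ(x) = φ(y) and x ≠ y, then (after possibly swapping x and y) there exists k ≥ 1 and digits a_0, …, a_{k-1} with a_{k-1} > 0 such that x = a_0 + a_1 p + ⋯ + a_{k-1} p^{k-1} and y = a_0 + a_1 p + ⋯ + (a_{k-1}-1) p^{k-1} + Σ_{i≥k} (p-1) p^i. -/

import Mathlib

open Filter Finset MeasureTheory
open scoped Classical

variable (p : ℕ) [hp : Fact p.Prime]

/-- The `i`-th base-`p` digit of a `p`-adic integer. -/
noncomputable def digit (x : ℤ_[p]) (i : ℕ) : ℕ := x.appr (i + 1) / p ^ i % p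

/-- The Monna map `φ : ℤ_p → [0,1]`, `φ(Σ aᵢ pⁱ) = Σ aᵢ p^{-i-1}`. -/
noncomputable def monna (x : ℤ_[p]) : ℝ := ∑' i : ℕ, (digit p x i : ℝ) / (p : ℝ) ^ (i + 1)

lemma digit_lt (x : ℤ_[p]) (i : ℕ) : digit p x i < p := Nat.mod_lt _ hp.out.pos

lemma appr_succ (x : ℤ_[p]) (i : ℕ) :
    x.appr (i + 1) = x.appr i + digit p x i * p ^ i := by
  obtain ⟨c, hc⟩ := x.dvd_appr_sub_appr i (i+1) (Nat.le_succ _)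
  have hmono : x.appr i ≤ x.appr (i+1) := x.appr_mono (Nat.le_succ i)
  have h1 : x.appr (i+1) = x.appr i + p ^ i * c := by omega
  have hci : x.appr (i+1) / p ^ i = c := by
    rw [h1, Nat.add_mul_div_left _ _ (pow_pos hp.out.pos i),
      Nat.div_eq_of_lt (x.appr_lt i), zero_add]
  have hclt : c < p := by
    have := x.appr_lt (i+1)
    have hpi : 0 < p ^ i := pow_pos hp.out.pos i
    rw [h1] at this
    by_contra hge
    push_neg at hge
    have : p ^ i * p ≤ p ^ i * c := Nat.mul_le_mul_left _ hge
    rw [pow_succ] at *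
    omega
  rw [digit, hci, Nat.mod_eq_of_lt hclt, h1]
  congr 1
  exact mul_comm _ _

lemma appr_eq_sum (x : ℤ_[p]) (n : ℕ) :
    x.appr n = ∑ i ∈ range n, digit p x i * p ^ i := by
  induction n with
  | zero => rfl
  | succ n ih => rw [appr_succ, ih, sum_range_succ]

lemma summable_digit_mul (d : ℕ → ℕ) :
    Summable (fun i => (d i : ℤ_[p]) * (p : ℤ_[p]) ^ i) := by
  apply Summable.of_norm
  have hg : Summable (fun i : ℕ => ((p : ℝ)⁻¹) ^ i) := by
    apply summable_geometric_of_lt_one (by positivity)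
    rw [inv_lt_one_iff₀]
    right
    exact_mod_cast hp.out.one_lt
  refine Summable.of_nonneg_of_le (fun i => norm_nonneg _) (fun i => ?_) hg
  calc ‖(d i : ℤ_[p]) * (p : ℤ_[p]) ^ i‖ ≤ ‖(d i : ℤ_[p])‖ * ‖(p : ℤ_[p]) ^ i‖ :=
        norm_mul_le _ _
    _ ≤ 1 * ‖(p : ℤ_[p]) ^ i‖ := by
        gcongr; exact PadicInt.norm_le_one _
    _ = (p : ℝ)⁻¹ ^ i := by
          rw [one_mul, PadicInt.norm_p_pow, zpow_neg, inv_pow, zpow_natCast]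

lemma hasSum_digit (x : ℤ_[p]) :
    HasSum (fun i => (digit p x i : ℤ_[p]) * (p : ℤ_[p]) ^ i) x := by
  have hs := summable_digit_mul p (digit p x)
  have h1 : Filter.Tendsto (fun n => ∑ i ∈ range n, (digit p x i : ℤ_[p]) * (p : ℤ_[p]) ^ i)
      Filter.atTop (nhds x) := by
    rw [← tendsto_sub_nhds_zero_iff]
    apply squeeze_zero_norm (a := fun n => ((p : ℝ)⁻¹) ^ n)
    · intro n
      have : ((x.appr n : ℤ_[p])) = ∑ i ∈ range n, (digit p x i : ℤ_[p]) * (p : ℤ_[p]) ^ i := by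
        rw [appr_eq_sum]
        push_cast
        rfl
      rw [← this, norm_sub_rev]
      have := ((x - x.appr n).norm_le_pow_iff_mem_span_pow n).mpr (x.appr_spec n)
      calc ‖x - (x.appr n : ℤ_[p])‖ ≤ (p : ℝ) ^ (-n : ℤ) := this
        _ = (p : ℝ)⁻¹ ^ n := by
          rw [inv_pow, ← zpow_natCast, ← zpow_neg]
    · apply tendsto_pow_atTop_nhds_zero_of_lt_one (by positivity)
      rw [inv_lt_one_iff₀]; right; exact_mod_cast hp.out.one_lt
  have h2 := hs.hasSum.tendsto_sum_nat
  have h3 := hs.hasSum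
  rwa [tendsto_nhds_unique h2 h1] at h3


lemma summable_real (d : ℕ → ℕ) (hd : ∀ i, d i < p) :
    Summable (fun i : ℕ => (d i : ℝ) / (p : ℝ) ^ (i + 1)) := by
  have hp1 : (1 : ℝ) < p := by exact_mod_cast hp.out.one_lt
  have hg : Summable (fun i : ℕ => (p : ℝ) * ((p : ℝ)⁻¹) ^ (i + 1)) := by
    apply Summable.mul_left
    exact (summable_geometric_of_lt_one (by positivity)
      (by rw [inv_lt_one_iff₀]; right; exact hp1)).comp_injective (add_left_injective 1)
  refine Summable.of_nonneg_of_le (fun i => by positivity) (fun i => ?_) hg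
  rw [inv_pow, div_eq_mul_inv]
  gcongr
  exact (hd i).le

lemma tmax (n : ℕ) : ∑' i : ℕ, ((p : ℝ) - 1) / (p : ℝ) ^ ((i + (n + 1)) + 1)
    = 1 / (p : ℝ) ^ (n + 1) := by
  have hp1 : (1 : ℝ) < p := by exact_mod_cast hp.out.one_lt
  have hpne : (p : ℝ) ≠ 0 := by positivity
  have hc : ∀ i : ℕ, ((p : ℝ) - 1) / (p : ℝ) ^ ((i + (n + 1)) + 1)
      = (((p : ℝ) - 1) / (p : ℝ) ^ (n + 2)) * ((p : ℝ)⁻¹) ^ i := by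
    intro i
    rw [inv_pow]
    rw [show (i + (n + 1)) + 1 = (n + 2) + i by ring, pow_add]
    field_simp
  rw [tsum_congr hc, tsum_mul_left,
    tsum_geometric_of_lt_one (by positivity) (by rw [inv_lt_one_iff₀]; right; exact hp1)]
  have hinv : (p : ℝ)⁻¹ < 1 := by rw [inv_lt_one_iff₀]; right; exact hp1
  have hne1 : (p : ℝ) - 1 ≠ 0 := by linarith
  have h3 : (1 : ℝ) - (p : ℝ)⁻¹ = ((p : ℝ) - 1) / p := by field_simp
  rw [h3]
  field_simp
  ring

lemma real_key (a b : ℕ → ℕ) (ha : ∀ i, a i < p) (hb : ∀ i, b i < p)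
    (heq : ∑' i : ℕ, (a i : ℝ) / (p : ℝ) ^ (i + 1) = ∑' i : ℕ, (b i : ℝ) / (p : ℝ) ^ (i + 1))
    (n : ℕ) (hpre : ∀ i < n, a i = b i) (hgt : b n < a n) :
    a n = b n + 1 ∧ (∀ i, n < i → a i = 0) ∧ (∀ i, n < i → b i = p - 1) := by
  have hp1 : (1 : ℝ) < p := by exact_mod_cast hp.out.one_lt
  set fa : ℕ → ℝ := fun i => (a i : ℝ) / (p : ℝ) ^ (i + 1) with hfa
  set fb : ℕ → ℝ := fun i => (b i : ℝ) / (p : ℝ) ^ (i + 1) with hfb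
  have hsa : Summable fa := summable_real p a ha
  have hsb : Summable fb := summable_real p b hb
  have hsa' : Summable (fun i => fa (i + (n + 1))) := (summable_nat_add_iff (n+1)).mpr hsa
  have hsb' : Summable (fun i => fb (i + (n + 1))) := (summable_nat_add_iff (n+1)).mpr hsb
  have hsplit_a := Summable.sum_add_tsum_nat_add (f := fa) (n + 1) hsa
  have hsplit_b := Summable.sum_add_tsum_nat_add (f := fb) (n + 1) hsb
  set Ta := ∑' i : ℕ, fa (i + (n + 1)) with hTadef
  set Tb := ∑' i : ℕ, fb (i + (n + 1)) with hTbdef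
  -- prefix sums
  have hprefix : ∑ i ∈ range (n + 1), fa i
      = (∑ i ∈ range (n + 1), fb i) + ((a n : ℝ) - (b n : ℝ)) / (p : ℝ) ^ (n + 1) := by
    rw [sum_range_succ, sum_range_succ]
    have : ∑ i ∈ range n, fa i = ∑ i ∈ range n, fb i := by
      apply sum_congr rfl
      intro i hi
      simp only [hfa, hfb, hpre i (mem_range.mp hi)]
    rw [this]
    simp only [hfa, hfb]
    ring
  have hmain : ((a n : ℝ) - (b n : ℝ)) / (p : ℝ) ^ (n + 1) + Ta = Tb := by
    have h0 := heq
    rw [← hsplit_a, ← hsplit_b, hprefix] at h0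
    linarith
  have hTa0 : 0 ≤ Ta := tsum_nonneg (fun i => by positivity)
  have hmax := tmax p n
  have hsg : Summable (fun i : ℕ => ((p : ℝ) - 1) / (p : ℝ) ^ ((i + (n + 1)) + 1)) := by
    have := (summable_nat_add_iff (f := fun i : ℕ => ((p : ℝ) - 1) / (p : ℝ) ^ (i + 1)) (n+1)).mpr
      (summable_real p (fun _ => p - 1) (fun _ => Nat.sub_lt hp.out.pos one_pos) |>.congr ?_)
    · exact this
    · intro i
      congr 1
      push_cast [Nat.cast_sub hp.out.one_lt.le]
      ring
  have hterm_le : ∀ i : ℕ, fb (i + (n + 1)) ≤ ((p : ℝ) - 1) / (p : ℝ) ^ ((i + (n + 1)) + 1) := by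
    intro i
    apply div_le_div_of_nonneg_right ?h (by positivity)
    case h =>
      have := hb (i + (n + 1))
      have : (b (i + (n + 1)) : ℝ) + 1 ≤ p := by exact_mod_cast this
      linarith
  have hTbmax : Tb ≤ 1 / (p : ℝ) ^ (n + 1) := by
    rw [hTbdef, ← hmax]
    exact Summable.tsum_le_tsum hterm_le hsb' hsg
  have h1le : (1 : ℝ) ≤ (a n : ℝ) - (b n : ℝ) := by
    have : (b n : ℝ) + 1 ≤ a n := by exact_mod_cast hgt
    linarith
  have hppos : (0 : ℝ) < (p : ℝ) ^ (n + 1) := by positivity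
  -- squeeze
  have hTa_eq : Ta = 0 := by
    have h1 : 1 / (p : ℝ) ^ (n + 1) ≤ ((a n : ℝ) - (b n : ℝ)) / (p : ℝ) ^ (n + 1) := by
      gcongr
    linarith
  have hd1 : ((a n : ℝ) - (b n : ℝ)) = 1 := by
    have h2 : ((a n : ℝ) - (b n : ℝ)) / (p : ℝ) ^ (n + 1) ≤ 1 / (p : ℝ) ^ (n + 1) := by
      linarith
    have h3 := (div_le_div_iff_of_pos_right hppos).mp h2
    linarith [(div_le_div_iff_of_pos_right hppos).mpr h1le]
  have han : a n = b n + 1 := by exact_mod_cast (by linarith [hd1] : (a n : ℝ) = (b n : ℝ) + 1)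
  have hTb_eq : Tb = 1 / (p : ℝ) ^ (n + 1) := by rw [← hmain, hd1, hTa_eq]; ring
  refine ⟨han, ?_, ?_⟩
  · intro i hi
    have hfa0 : fa ((i - (n + 1)) + (n + 1)) ≤ Ta :=
      Summable.le_tsum hsa' _ (fun j _ => by positivity)
    rw [Nat.sub_add_cancel hi] at hfa0
    have hge : 0 ≤ fa i := by positivity
    have : fa i = 0 := le_antisymm (by linarith [hfa0, hTa_eq]) hge
    have hpow : (0:ℝ) < (p : ℝ) ^ (i + 1) := by positivity
    rw [hfa] at this
    simp only at this
    rw [div_eq_zero_iff] at this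
    exact_mod_cast this.resolve_right hpow.ne'
  · intro i hi
    set g : ℕ → ℝ := fun j => ((p : ℝ) - 1) / (p : ℝ) ^ ((j + (n + 1)) + 1) - fb (j + (n + 1))
      with hgdef
    have hsumg : Summable g := hsg.sub hsb'
    have htg : ∑' j, g j = 0 := by
      rw [hgdef, Summable.tsum_sub hsg hsb', hmax, ← hTbdef, hTb_eq]
      ring
    have hgle : g (i - (n + 1)) ≤ 0 := by
      rw [← htg]
      exact Summable.le_tsum hsumg _ (fun j _ => by
        simp only [hgdef]
        linarith [hterm_le j])
    have hgge : 0 ≤ g (i - (n + 1)) := by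
      simp only [hgdef]
      linarith [hterm_le (i - (n + 1))]
    have hg0 : g (i - (n + 1)) = 0 := le_antisymm hgle hgge
    rw [hgdef] at hg0
    simp only [Nat.sub_add_cancel hi] at hg0
    have hpow : (0:ℝ) < (p : ℝ) ^ (i + 1) := by positivity
    have hcast : (b i : ℝ) = (p : ℝ) - 1 := by
      rw [sub_eq_zero] at hg0
      have := hg0.symm
      rw [hfb] at this
      simp only at this
      field_simp at this
      linarith
    have : (b i : ℝ) + 1 = p := by linarith
    have : b i + 1 = p := by exact_mod_cast this
    omega

lemma key_aux (x y : ℤ_[p]) (h : monna p x = monna p y) (n : ℕ)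
    (hpre : ∀ i < n, digit p x i = digit p y i) (hgt : digit p y n < digit p x n) :
    ∃ (k : ℕ) (a : ℕ → ℕ), 1 ≤ k ∧ (∀ i, a i < p) ∧ 0 < a (k - 1) ∧
      x = ∑ i ∈ Finset.range k, (a i : ℤ_[p]) * (p : ℤ_[p]) ^ i ∧
      y = (∑ i ∈ Finset.range k, (a i : ℤ_[p]) * (p : ℤ_[p]) ^ i) - (p : ℤ_[p]) ^ (k - 1)
          + ∑' i : ℕ, ((p : ℤ_[p]) - 1) * (p : ℤ_[p]) ^ (k + i) := by
  obtain ⟨h1, h2, h3⟩ := real_key p (digit p x) (digit p y) (digit_lt p x) (digit_lt p y)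
    h n hpre hgt
  refine ⟨n + 1, digit p x, Nat.le_add_left 1 n, digit_lt p x, ?_, ?_, ?_⟩
  · simp only [Nat.add_sub_cancel]
    omega
  · refine ((hasSum_digit p x).tsum_eq.symm).trans (tsum_eq_sum ?_)
    intro i hi
    rw [mem_range, not_lt] at hi
    rw [h2 i (by omega)]
    simp
  · have hy := (hasSum_digit p y).tsum_eq
    have hsplit := Summable.sum_add_tsum_nat_add
      (f := fun i => (digit p y i : ℤ_[p]) * (p : ℤ_[p]) ^ i) (n + 1)
      (summable_digit_mul p (digit p y))
    rw [hy] at hsplit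
    have htail : ∑' i : ℕ, (digit p y (i + (n + 1)) : ℤ_[p]) * (p : ℤ_[p]) ^ (i + (n + 1))
        = ∑' i : ℕ, ((p : ℤ_[p]) - 1) * (p : ℤ_[p]) ^ ((n + 1) + i) := by
      apply tsum_congr
      intro i
      rw [h3 (i + (n + 1)) (by omega)]
      rw [add_comm i (n + 1)]
      congr 1
      push_cast [Nat.cast_sub hp.out.one_lt.le]
      ring
    have hprefix : ∑ i ∈ range (n + 1), (digit p y i : ℤ_[p]) * (p : ℤ_[p]) ^ i
        = (∑ i ∈ range (n + 1), (digit p x i : ℤ_[p]) * (p : ℤ_[p]) ^ i)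
          - (p : ℤ_[p]) ^ n := by
      rw [sum_range_succ, sum_range_succ]
      have hs : ∑ i ∈ range n, (digit p y i : ℤ_[p]) * (p : ℤ_[p]) ^ i
          = ∑ i ∈ range n, (digit p x i : ℤ_[p]) * (p : ℤ_[p]) ^ i := by
        apply sum_congr rfl
        intro i hi
        rw [hpre i (mem_range.mp hi)]
      rw [hs]
      have : (digit p x n : ℤ_[p]) = (digit p y n : ℤ_[p]) + 1 := by
        rw [h1]; push_cast; ring
      rw [this]
      ring
    rw [← hsplit, htail, hprefix]
    simp only [Nat.add_sub_cancel]

theorem stmt2 (x y : ℤ_[p]) (h : monna p x = monna p y) (hxy : x ≠ y) :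
    ∃ (k : ℕ) (a : ℕ → ℕ), 1 ≤ k ∧ (∀ i, a i < p) ∧ 0 < a (k - 1) ∧
      ((x = ∑ i ∈ Finset.range k, (a i : ℤ_[p]) * (p : ℤ_[p]) ^ i ∧
        y = (∑ i ∈ Finset.range k, (a i : ℤ_[p]) * (p : ℤ_[p]) ^ i) - (p : ℤ_[p]) ^ (k - 1)
            + ∑' i : ℕ, ((p : ℤ_[p]) - 1) * (p : ℤ_[p]) ^ (k + i)) ∨
       (y = ∑ i ∈ Finset.range k, (a i : ℤ_[p]) * (p : ℤ_[p]) ^ i ∧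
        x = (∑ i ∈ Finset.range k, (a i : ℤ_[p]) * (p : ℤ_[p]) ^ i) - (p : ℤ_[p]) ^ (k - 1)
            + ∑' i : ℕ, ((p : ℤ_[p]) - 1) * (p : ℤ_[p]) ^ (k + i))) := by
  have hne : ∃ m, digit p x m ≠ digit p y m := by
    by_contra hcon
    push_neg at hcon
    apply hxy
    rw [← (hasSum_digit p x).tsum_eq, ← (hasSum_digit p y).tsum_eq]
    exact tsum_congr (fun i => by rw [hcon i])
  set n := Nat.find hne with hn
  have hspec : digit p x n ≠ digit p y n := Nat.find_spec hne
  have hpre : ∀ i < n, digit p x i = digit p y i := by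
    intro i hi
    by_contra hcon
    exact absurd hi (not_lt.mpr (Nat.find_le hcon))
  rcases hspec.lt_or_gt with hlt | hlt
  · obtain ⟨k, a, hk, ha, hpos, h1, h2⟩ := key_aux p y x h.symm n
      (fun i hi => (hpre i hi).symm) hlt
    exact ⟨k, a, hk, ha, hpos, Or.inr ⟨h1, h2⟩⟩
  · obtain ⟨k, a, hk, ha, hpos, h1, h2⟩ := key_aux p x y h n hpre hlt
    exact ⟨k, a, hk, ha, hpos, Or.inl ⟨h1, h2⟩⟩
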